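/- If G₁, G₂ ∈ C(K) satisfy Φ((G₁)_U) = (G₁)_U, Φ((G₂)_U) = (G₂)_U, and G₁(x) = G₂(x) for all x ∈ ∂U, then G₁ = G₂ on K. -/

import Mathlib

open MeasureTheory Filter Topology ComplexOrder

/-- `Φ` is a Markov operator on the bounded Borel measurable functions on `U`:
for each `x` there is a Borel probability measure `P x` representing `Φ` at `x`. -/
def IsMarkovOperator {U : Type*} [MeasurableSpace U]
    (Φ : (U → ℂ) → (U → ℂ)) : Prop :=
  ∀ x : U, ∃ P : Measure U, IsProbabilityMeasure P ∧
    ∀ f : U → ℂ, Measurable f → (∃ C : ℝ, ∀ y, ‖f y‖ ≤ C) →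
      Φ f x = ∫ y, f y ∂P

/-- `Φ` has the strong Feller property: it maps bounded Borel measurable
functions to continuous functions. -/
def HasStrongFeller {U : Type*} [MeasurableSpace U] [TopologicalSpace U]
    (Φ : (U → ℂ) → (U → ℂ)) : Prop :=
  ∀ f : U → ℂ, Measurable f → (∃ C : ℝ, ∀ y, ‖f y‖ ≤ C) → Continuous (Φ f)

/-- Boundary condition (A): for each boundary point `x` there is a barrier
`h ∈ C(K)` with `h x = 0`, `h < 0` off `x`, and `Φ (h_U) ≥ h_U` on `U`. -/
def CondA {K : Type*} [TopologicalSpace K] (U : Set K)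
    (Φ : (↥U → ℂ) → (↥U → ℂ)) : Prop :=
  ∀ x ∈ Uᶜ, ∃ h : C(K, ℂ), h x = 0 ∧ (∀ y : K, y ≠ x → h y < 0) ∧
    ∀ u : ↥U, h u.1 ≤ Φ (fun v : ↥U => h v.1) u

/-- Maximum principle (B): every real-valued `g ∈ C(K)` with `Φ (g_U) ≥ g_U`
on `U` attaining its global maximum inside `U` is constant. -/
def CondB {K : Type*} [TopologicalSpace K] (U : Set K)
    (Φ : (↥U → ℂ) → (↥U → ℂ)) : Prop :=
  ∀ g : C(K, ℂ), (∀ x : K, (g x).im = 0) →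
    (∀ u : ↥U, g u.1 ≤ Φ (fun v : ↥U => g v.1) u) →
    (∃ z ∈ U, ∀ x : K, g x ≤ g z) →
    ∀ x y : K, g x = g y

/-- The map `Ψ` : `Ψ f = Φ (f_U)` on `U` and `Ψ f = f` on `∂U = K \ U`. -/
noncomputable def psiFun {K : Type*} (U : Set K)
    (Φ : (↥U → ℂ) → (↥U → ℂ)) (f : K → ℂ) : K → ℂ :=
  open Classical in fun x => if hx : x ∈ U then Φ (fun v : ↥U => f v.1) ⟨x, hx⟩ else f x

section Aux

variable {K : Type*} [MetricSpace K] [CompactSpace K] [MeasurableSpace K] [BorelSpace K]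
  (U : Set K) (Φ : (↥U → ℂ) → (↥U → ℂ))

lemma restr_meas (g : C(K, ℂ)) : Measurable (fun v : ↥U => g v.1) :=
  (g.continuous.comp continuous_subtype_val).measurable

lemma restr_bdd (g : C(K, ℂ)) : ∃ C : ℝ, ∀ v : ↥U, ‖g v.1‖ ≤ C :=
  ⟨‖g‖, fun v => g.norm_coe_le_norm v.1⟩

lemma restr_integrable (g : C(K, ℂ)) (P : Measure ↥U) [IsFiniteMeasure P] :
    Integrable (fun v : ↥U => g v.1) P :=
  ⟨(restr_meas U g).aestronglyMeasurable,
    HasFiniteIntegral.of_bounded (C := ‖g‖)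
      (Eventually.of_forall fun v => g.norm_coe_le_norm v.1)⟩

/-- Key maximum-principle lemma: a real-valued fixed point vanishing on the
boundary has nonpositive real part everywhere. -/
lemma key_le (hM : IsMarkovOperator Φ) (hB : CondB U Φ)
    (hne : ∃ a, a ∈ Uᶜ)
    (g : C(K, ℂ)) (him : ∀ x, (g x).im = 0)
    (hfix : ∀ u : ↥U, Φ (fun v : ↥U => g v.1) u = g u.1)
    (hb : ∀ x ∈ Uᶜ, g x = 0) :
    ∀ x : K, (g x).re ≤ 0 := by
  obtain ⟨a, ha⟩ := hne
  have hKne : Nonempty K := ⟨a⟩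
  obtain ⟨z, -, hz⟩ := isCompact_univ.exists_isMaxOn Set.univ_nonempty
    ((Complex.continuous_re.comp g.continuous).continuousOn)
  intro x
  by_cases hzU : z ∈ U
  · have hconst := hB g him (fun u => (hfix u).symm.le)
      ⟨z, hzU, fun y => Complex.le_def.2 ⟨hz (Set.mem_univ y), by rw [him, him]⟩⟩
    have : g x = 0 := (hconst x a).trans (hb a ha)
    simp [this]
  · have h0 : g z = 0 := hb z hzU
    have := hz (Set.mem_univ x)
    simpa [h0] using this
end Aux

/-- Two `Φ`-harmonic functions in `C(K)` agreeing on `∂U`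
agree on all of `K`. -/
theorem stmt2 {K : Type*} [MetricSpace K] [CompactSpace K]
    [MeasurableSpace K] [BorelSpace K]
    (U : Set K) (hUopen : IsOpen U) (hUdense : Dense U)
    (hbd : ∃ a b : K, a ∈ Uᶜ ∧ b ∈ Uᶜ ∧ a ≠ b)
    (Φ : (↥U → ℂ) → (↥U → ℂ))
    (hM : IsMarkovOperator Φ) (hSF : HasStrongFeller Φ)
    (hA : CondA U Φ) (hB : CondB U Φ)
    (G₁ G₂ : C(K, ℂ))
    (hG₁ : ∀ u : ↥U, Φ (fun v : ↥U => G₁ v.1) u = G₁ u.1)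
    (hG₂ : ∀ u : ↥U, Φ (fun v : ↥U => G₂ v.1) u = G₂ u.1)
    (hbdry : ∀ x ∈ Uᶜ, G₁ x = G₂ x) :
    ∀ x : K, G₁ x = G₂ x := by
  obtain ⟨a, b, ha, hb, -⟩ := hbd
  -- main symmetric step
  have main : ∀ A B : C(K, ℂ),
      (∀ u : ↥U, Φ (fun v : ↥U => A v.1) u = A u.1) →
      (∀ u : ↥U, Φ (fun v : ↥U => B v.1) u = B u.1) →
      (∀ x ∈ Uᶜ, A x = B x) →
      ∀ x : K, (A x - B x).re ≤ 0 ∧ (A x - B x).im ≤ 0 := by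
    intro A B hAfix hBfix hABb
    set g : C(K, ℂ) := A - B with hg
    have hgapp : ∀ x, g x = A x - B x := fun x => rfl
    have hgb : ∀ x ∈ Uᶜ, g x = 0 := fun x hx => by
      rw [hgapp, hABb x hx, sub_self]
    -- g is a fixed point of Φ
    have hgfix : ∀ u : ↥U, Φ (fun v : ↥U => g v.1) u = g u.1 := by
      intro u
      obtain ⟨P, hP, hrep⟩ := hM u
      have e1 := hrep _ (restr_meas U A) (restr_bdd U A)
      have e2 := hrep _ (restr_meas U B) (restr_bdd U B)
      have e3 := hrep _ (restr_meas U g) (restr_bdd U g)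
      rw [e3, hgapp]
      have : (fun v : ↥U => g v.1) = fun v : ↥U => A v.1 - B v.1 := by
        funext v; exact hgapp v.1
      rw [this]
      rw [integral_sub (restr_integrable U A P) (restr_integrable U B P),
        ← e1, ← e2, hAfix u, hBfix u]
    -- real part
    have hre : ∀ x : K, (g x).re ≤ 0 := by
      set gr : C(K, ℂ) := ⟨fun x => ((g x).re : ℂ),
        Complex.continuous_ofReal.comp (Complex.continuous_re.comp g.continuous)⟩ with hgrdef
      have hgrfix : ∀ u : ↥U, Φ (fun v : ↥U => gr v.1) u = gr u.1 := by
        intro u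
        obtain ⟨P, hP, hrep⟩ := hM u
        have e3 := hrep _ (restr_meas U gr) (restr_bdd U gr)
        have eg := hrep _ (restr_meas U g) (restr_bdd U g)
        have hint : Integrable (fun v : ↥U => g v.1) P := restr_integrable U g P
        have hre1 : ∫ v, (g v.1).re ∂P = (∫ v, g v.1 ∂P).re := by
          simpa using integral_re hint
        have hkey : ∫ v, gr v.1 ∂P = ((∫ v, g v.1 ∂P).re : ℂ) := by
          calc ∫ v, gr v.1 ∂P = ∫ v, (((g v.1).re : ℝ) : ℂ) ∂P := rfl
            _ = ((∫ v, (g v.1).re ∂P : ℝ) : ℂ) := integral_ofReal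
            _ = _ := by rw [hre1]
        rw [e3, hkey, ← eg, hgfix u]
        rfl
      have hk := key_le U Φ hM hB ⟨a, ha⟩ gr (fun x => Complex.ofReal_im _) hgrfix
        (fun x hx => by show ((g x).re : ℂ) = 0; rw [hgb x hx]; simp)
      intro x
      exact hk x
    -- imaginary part
    have him : ∀ x : K, (g x).im ≤ 0 := by
      set gi : C(K, ℂ) := ⟨fun x => ((g x).im : ℂ),
        Complex.continuous_ofReal.comp (Complex.continuous_im.comp g.continuous)⟩ with hgidef
      have hgifix : ∀ u : ↥U, Φ (fun v : ↥U => gi v.1) u = gi u.1 := by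
        intro u
        obtain ⟨P, hP, hrep⟩ := hM u
        have e3 := hrep _ (restr_meas U gi) (restr_bdd U gi)
        have eg := hrep _ (restr_meas U g) (restr_bdd U g)
        have hint : Integrable (fun v : ↥U => g v.1) P := restr_integrable U g P
        have him1 : ∫ v, (g v.1).im ∂P = (∫ v, g v.1 ∂P).im := by
          simpa using integral_im hint
        have hkey : ∫ v, gi v.1 ∂P = ((∫ v, g v.1 ∂P).im : ℂ) := by
          calc ∫ v, gi v.1 ∂P = ∫ v, (((g v.1).im : ℝ) : ℂ) ∂P := rfl
            _ = ((∫ v, (g v.1).im ∂P : ℝ) : ℂ) := integral_ofReal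
            _ = _ := by rw [him1]
        rw [e3, hkey, ← eg, hgfix u]
        rfl
      have hk := key_le U Φ hM hB ⟨a, ha⟩ gi (fun x => Complex.ofReal_im _) hgifix
        (fun x hx => by show ((g x).im : ℂ) = 0; rw [hgb x hx]; simp)
      intro x
      exact hk x
    exact fun x => ⟨hre x, him x⟩
  intro x
  have h12 := main G₁ G₂ hG₁ hG₂ hbdry x
  have h21 := main G₂ G₁ hG₂ hG₁ (fun y hy => (hbdry y hy).symm) x
  have hsub : G₁ x - G₂ x = 0 := by
    apply Complex.ext
    · have h1 := h12.1
      have h2 := h21.1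
      simp only [Complex.sub_re, Complex.zero_re] at h1 h2 ⊢
      linarith
    · have h1 := h12.2
      have h2 := h21.2
      simp only [Complex.sub_im, Complex.zero_im] at h1 h2 ⊢
      linarith
  exact sub_eq_zero.1 hsub
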